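/- arXiv:math/0603627 — 3 statements merged into one kernel-verified Lean document; each statement's English description precedes it below -/
import Mathlib

section
/- Let d ≥ 1, α ∈ (0,2) with α < d, κ > 0, let 1 < p < ∞ with conjugate exponent q (1/p + 1/q = 1), and let v ≥ 0 with v ∈ L^p(ℝᵈ) ∩ L¹(ℝᵈ) and supp v contained in a bounded measurable set B ⊂ ℝᵈ. Then there is a constant C = C(B,d,α,κ,p) > 0 such that for every ε > 0 and every capacitory potential u_ε of εv with constant κ, the scattering length Γ(εv) = ∫_{ℝᵈ} εv(x)(1−u_ε(x)) dx satisfies 0 ≤ ε‖v‖_{L¹} − Γ(εv) ≤ C ε^{1+1/q} ‖v‖_{L^p} ‖v‖_{L¹}^{1/q}. -/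
open MeasureTheory ENNReal
open Set Metric

lemma aux_finite_ball (d : ℕ) {t : ℝ} (ht : t < 0) (htd : -t < (d : ℝ)) :
    ∫⁻ x : EuclideanSpace ℝ (Fin d) in Metric.ball 0 1,
      ENNReal.ofReal (‖x‖ ^ t) < ∞ := by
  have hmeas : AEMeasurable (fun x : EuclideanSpace ℝ (Fin d) => ‖x‖ ^ t)
      ((volume : Measure (EuclideanSpace ℝ (Fin d))).restrict (Metric.ball 0 1)) :=
    (by fun_prop : Measurable fun x : EuclideanSpace ℝ (Fin d) => ‖x‖ ^ t).aemeasurable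
  rw [MeasureTheory.lintegral_eq_lintegral_meas_le _
    (Filter.Eventually.of_forall fun x => Real.rpow_nonneg (norm_nonneg x) t) hmeas]
  set ν := (volume : Measure (EuclideanSpace ℝ (Fin d))).restrict (Metric.ball 0 1) with hν
  have hball : (volume : Measure (EuclideanSpace ℝ (Fin d))) (Metric.ball 0 1) < ∞ :=
    measure_ball_lt_top
  have hdt : (d : ℝ) / t < -1 := by
    rw [div_lt_iff_of_neg ht]; linarith
  have part1 : ∫⁻ u in Ioc (0:ℝ) 1, ν {a | u ≤ ‖a‖ ^ t} < ∞ := by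
    calc ∫⁻ u in Ioc (0:ℝ) 1, ν {a | u ≤ ‖a‖ ^ t}
        ≤ ∫⁻ _ in Ioc (0:ℝ) 1, volume (Metric.ball (0 : EuclideanSpace ℝ (Fin d)) 1) := by
          refine setLIntegral_mono' measurableSet_Ioc fun u _ => ?_
          calc ν {a | u ≤ ‖a‖ ^ t} ≤ ν Set.univ := measure_mono (Set.subset_univ _)
          _ = volume (Metric.ball (0 : EuclideanSpace ℝ (Fin d)) 1) := by
              rw [hν, Measure.restrict_apply_univ]
      _ = volume (Metric.ball (0 : EuclideanSpace ℝ (Fin d)) 1) * volume (Ioc (0:ℝ) 1) :=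
          setLIntegral_const _ _
      _ < ∞ := ENNReal.mul_lt_top hball (by simp)
  have part2 : ∫⁻ u in Ioi (1:ℝ), ν {a | u ≤ ‖a‖ ^ t} < ∞ := by
    have hb : ∀ u ∈ Ioi (1:ℝ), ν {a | u ≤ ‖a‖ ^ t}
        ≤ ENNReal.ofReal (u ^ ((d:ℝ)/t)) * volume (Metric.ball (0 : EuclideanSpace ℝ (Fin d)) 1) := by
      intro u hu
      have hu0 : (0:ℝ) < u := lt_trans one_pos hu
      have hsub : {a : EuclideanSpace ℝ (Fin d) | u ≤ ‖a‖ ^ t}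
          ⊆ Metric.closedBall 0 (u ^ t⁻¹) := by
        intro a ha
        rw [Metric.mem_closedBall, dist_zero_right]
        rcases eq_or_lt_of_le (norm_nonneg a) with h0 | h0
        · rw [← h0]; exact Real.rpow_nonneg hu0.le _
        · have := Real.rpow_le_rpow_of_nonpos hu0 ha (le_of_lt (inv_neg''.mpr ht))
          rwa [Real.rpow_rpow_inv (norm_nonneg a) (ne_of_lt ht)] at this
      calc ν {a | u ≤ ‖a‖ ^ t}
          ≤ volume {a : EuclideanSpace ℝ (Fin d) | u ≤ ‖a‖ ^ t} := Measure.restrict_le_self _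
        _ ≤ volume (Metric.closedBall (0 : EuclideanSpace ℝ (Fin d)) (u ^ t⁻¹)) :=
            measure_mono hsub
        _ = ENNReal.ofReal ((u ^ t⁻¹) ^ Module.finrank ℝ (EuclideanSpace ℝ (Fin d))) *
            volume (Metric.ball (0 : EuclideanSpace ℝ (Fin d)) 1) :=
            Measure.addHaar_closedBall _ _ (Real.rpow_nonneg hu0.le _)
        _ = ENNReal.ofReal (u ^ ((d:ℝ)/t)) * volume (Metric.ball (0 : EuclideanSpace ℝ (Fin d)) 1) := by
            rw [finrank_euclideanSpace_fin, ← Real.rpow_natCast (u ^ t⁻¹) d,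
              ← Real.rpow_mul hu0.le]
            congr 2
            field_simp
    calc ∫⁻ u in Ioi (1:ℝ), ν {a | u ≤ ‖a‖ ^ t}
        ≤ ∫⁻ u in Ioi (1:ℝ), ENNReal.ofReal (u ^ ((d:ℝ)/t)) *
            volume (Metric.ball (0 : EuclideanSpace ℝ (Fin d)) 1) :=
          setLIntegral_mono' measurableSet_Ioi hb
      _ = (∫⁻ u in Ioi (1:ℝ), ENNReal.ofReal (u ^ ((d:ℝ)/t))) *
            volume (Metric.ball (0 : EuclideanSpace ℝ (Fin d)) 1) :=
          lintegral_mul_const' _ _ hball.ne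
      _ < ∞ := ENNReal.mul_lt_top
          ((integrableOn_Ioi_rpow_of_lt hdt one_pos).setLIntegral_lt_top) hball
  calc ∫⁻ u in Ioi (0:ℝ), ν {a | u ≤ ‖a‖ ^ t}
      ≤ ∫⁻ u in Ioc (0:ℝ) 1 ∪ Ioi 1, ν {a | u ≤ ‖a‖ ^ t} :=
        lintegral_mono_set Ioi_subset_Ioc_union_Ioi
    _ ≤ (∫⁻ u in Ioc (0:ℝ) 1, ν {a | u ≤ ‖a‖ ^ t}) +
        ∫⁻ u in Ioi (1:ℝ), ν {a | u ≤ ‖a‖ ^ t} := lintegral_union_le _ _ _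
    _ < ∞ := ENNReal.add_lt_top.2 ⟨part1, part2⟩

lemma aux_kernel_bound (d : ℕ) {t : ℝ} (ht : t < 0)
    (B : Set (EuclideanSpace ℝ (Fin d))) (y : EuclideanSpace ℝ (Fin d)) :
    ∫⁻ x in B, ENNReal.ofReal (‖x - y‖ ^ t) ≤
      (∫⁻ z : EuclideanSpace ℝ (Fin d) in Metric.ball 0 1, ENNReal.ofReal (‖z‖ ^ t))
        + volume B := by
  set G : EuclideanSpace ℝ (Fin d) → ℝ≥0∞ :=
    (Metric.ball (0 : EuclideanSpace ℝ (Fin d)) 1).indicator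
      (fun z => ENNReal.ofReal (‖z‖ ^ t)) with hGdef
  have hG : Measurable G :=
    Measurable.indicator (by fun_prop) measurableSet_ball
  have hpt : ∀ x, ENNReal.ofReal (‖x - y‖ ^ t) ≤ G (x - y) + 1 := by
    intro x
    by_cases h : x - y ∈ Metric.ball (0 : EuclideanSpace ℝ (Fin d)) 1
    · rw [hGdef, Set.indicator_of_mem h]; exact le_self_add
    · rw [hGdef, Set.indicator_of_notMem h, zero_add]
      have h1 : (1:ℝ) ≤ ‖x - y‖ := by
        simpa [mem_ball_zero_iff, not_lt] using h
      calc ENNReal.ofReal (‖x - y‖ ^ t) ≤ ENNReal.ofReal 1 :=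
            ENNReal.ofReal_le_ofReal (Real.rpow_le_one_of_one_le_of_nonpos h1 ht.le)
        _ = 1 := ENNReal.ofReal_one
  calc ∫⁻ x in B, ENNReal.ofReal (‖x - y‖ ^ t)
      ≤ ∫⁻ x in B, (G (x - y) + 1) := lintegral_mono hpt
    _ = (∫⁻ x in B, G (x - y)) + ∫⁻ _ in B, (1:ℝ≥0∞) :=
        lintegral_add_left ((hG.comp (measurable_id.sub measurable_const))) _
    _ ≤ (∫⁻ x, G (x - y)) + volume B := by
        rw [setLIntegral_one]
        exact add_le_add (lintegral_mono' Measure.restrict_le_self le_rfl) le_rfl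
    _ = (∫⁻ z, G z) + volume B := by rw [lintegral_sub_right_eq_self G y]
    _ = (∫⁻ z : EuclideanSpace ℝ (Fin d) in Metric.ball 0 1, ENNReal.ofReal (‖z‖ ^ t))
        + volume B := by rw [hGdef, lintegral_indicator measurableSet_ball]

lemma aux_ofReal_integral_le {X : Type*} [MeasurableSpace X] {μ : Measure X}
    (f : X → ℝ) (hf : ∀ x, 0 ≤ f x) :
    ENNReal.ofReal (∫ x, f x ∂μ) ≤ ∫⁻ x, ENNReal.ofReal (f x) ∂μ := by
  by_cases hi : Integrable f μ
  · exact le_of_eq (ofReal_integral_eq_lintegral_ofReal hi (Filter.Eventually.of_forall hf))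
  · rw [integral_undef hi]; simp


/-- A measurable function `u : ℝᵈ → ℝ` is a capacitory potential of the nonnegative potential
`v` with constant `κ` if `0 ≤ u ≤ 1` everywhere and
`u(x) = κ ∫ v(y) (1 - u(y)) ‖x - y‖ ^ (α - d) dy` for a.e. `x`. -/
def IsCapacitoryPotential (d : ℕ) (α κ : ℝ)
    (v u : EuclideanSpace ℝ (Fin d) → ℝ) : Prop :=
  Measurable u ∧ (∀ x, 0 ≤ u x ∧ u x ≤ 1) ∧
    ∀ᵐ x : EuclideanSpace ℝ (Fin d),
      u x = κ * ∫ y : EuclideanSpace ℝ (Fin d), v y * (1 - u y) * ‖x - y‖ ^ (α - d)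

/-- For `v ≥ 0` in `L^p ∩ L¹` with bounded support, there is
`C = C(B,d,α,κ,p) > 0` such that for every `ε > 0` and every capacitory potential `u_ε` of
`εv`, the scattering length `Γ(εv) = ∫ εv (1 - u_ε)` satisfies
`0 ≤ ε ‖v‖₁ - Γ(εv) ≤ C ε^(1+1/q) ‖v‖_p ‖v‖₁^(1/q)`. -/
theorem scatteringLength_small_coupling_expansion (d : ℕ) (hd : 1 ≤ d) (α κ : ℝ)
    (hα0 : 0 < α) (hα2 : α < 2) (hαd : α < d) (hκ : 0 < κ)
    (p q : ℝ) (hp : 1 < p) (hpq : 1 / p + 1 / q = 1)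
    (B : Set (EuclideanSpace ℝ (Fin d))) (hB : Bornology.IsBounded B)
    (hBm : MeasurableSet B)
    (v : EuclideanSpace ℝ (Fin d) → ℝ) (hv1 : Integrable v)
    (hvp : MemLp v (ENNReal.ofReal p) (volume : Measure (EuclideanSpace ℝ (Fin d))))
    (hv0 : ∀ x, 0 ≤ v x) (hsupp : Function.support v ⊆ B) :
    ∃ C > (0 : ℝ), ∀ ε > (0 : ℝ), ∀ u : EuclideanSpace ℝ (Fin d) → ℝ,
      IsCapacitoryPotential d α κ (fun x => ε * v x) u →
        0 ≤ ε * (∫ x : EuclideanSpace ℝ (Fin d), v x) -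
            (∫ x : EuclideanSpace ℝ (Fin d), ε * v x * (1 - u x)) ∧
          ε * (∫ x : EuclideanSpace ℝ (Fin d), v x) -
              (∫ x : EuclideanSpace ℝ (Fin d), ε * v x * (1 - u x)) ≤
            C * ε ^ (1 + 1 / q) *
              (eLpNorm v (ENNReal.ofReal p)
                (volume : Measure (EuclideanSpace ℝ (Fin d)))).toReal *
              (∫ x : EuclideanSpace ℝ (Fin d), v x) ^ (1 / q) := by
  have hp0 : (0:ℝ) < p := lt_trans one_pos hp
  have hpinv1 : 1 / p < 1 := by rw [div_lt_one hp0]; exact hp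
  have hpinv0 : 0 < 1 / p := by positivity
  have hqinv0 : 0 < 1 / q := by linarith
  have hq0 : (0:ℝ) < q := by
    rcases lt_trichotomy q 0 with h | h | h
    · have : 1 / q < 0 := div_neg_of_pos_of_neg one_pos h
      linarith
    · rw [h] at hqinv0; simp at hqinv0
    · exact h
  have hq1 : (1:ℝ) < q := by
    have h1 : 1 / q < 1 := by linarith
    rwa [div_lt_one hq0] at h1
  have hqne : q ≠ 0 := ne_of_gt hq0
  have htneg : α - (d:ℝ) < 0 := by linarith
  have htd : -(α - (d:ℝ)) < (d:ℝ) := by linarith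
  have hintv : 0 ≤ ∫ x : EuclideanSpace ℝ (Fin d), v x := integral_nonneg hv0
  set I₁ := ∫⁻ z : EuclideanSpace ℝ (Fin d) in Metric.ball 0 1,
    ENNReal.ofReal (‖z‖ ^ (α - (d:ℝ))) with hI₁
  have hI₁fin : I₁ < ∞ := aux_finite_ball d htneg htd
  have hBvol : volume B < ∞ := hB.measure_lt_top
  set C' := I₁ + volume B with hC'def
  have hC'fin : C' ≠ ∞ := by
    rw [hC'def]
    exact (ENNReal.add_lt_top.2 ⟨hI₁fin, hBvol⟩).ne
  set C₀ := C'.toReal with hC₀def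
  have hC₀0 : 0 ≤ C₀ := ENNReal.toReal_nonneg
  haveI : IsFiniteMeasure ((volume : Measure (EuclideanSpace ℝ (Fin d))).restrict B) :=
    ⟨by rw [Measure.restrict_apply_univ]; exact hBvol⟩
  refine ⟨(κ * C₀) ^ (1/q) + 1, by positivity, ?_⟩
  intro ε hε u hu
  obtain ⟨humeas, hu01, huae⟩ := hu
  -- integrability of v * u
  have hvu : Integrable (fun x => v x * u x) := by
    have h := hv1.bdd_mul humeas.aestronglyMeasurable
      (c := 1) (Filter.Eventually.of_forall fun x => by
        rw [Real.norm_eq_abs, abs_of_nonneg (hu01 x).1]; exact (hu01 x).2)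
    have heq : (fun x => u x * v x) = fun x => v x * u x := funext fun x => mul_comm _ _
    rwa [heq] at h
  -- Step 1 : the difference equals ε ∫ v u
  have hIv : (∫ x, ε * v x * (1 - u x)) =
      ε * ((∫ x, v x) - ∫ x, v x * u x) := by
    rw [← integral_sub hv1 hvu, ← integral_const_mul]
    exact integral_congr_ae (Filter.Eventually.of_forall fun x => by ring)
  have hdiff : ε * (∫ x : EuclideanSpace ℝ (Fin d), v x) -
      (∫ x, ε * v x * (1 - u x)) = ε * ∫ x, v x * u x := by
    rw [hIv]; ring
  have hvunn : 0 ≤ ∫ x, v x * u x :=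
    integral_nonneg fun x => mul_nonneg (hv0 x) (hu01 x).1
  -- measurable representative of v
  obtain ⟨w, hwmeas, hw_eq⟩ : ∃ w, Measurable w ∧ v =ᵐ[volume] w := by
    rcases hv1.1 with ⟨w, hw1, hw2⟩
    exact ⟨w, hw1.measurable, hw2⟩
  -- a.e. pointwise bound on u
  have hae : ∀ᵐ x : EuclideanSpace ℝ (Fin d),
      ENNReal.ofReal (u x) ≤ (ENNReal.ofReal κ * ENNReal.ofReal ε) *
        ∫⁻ y, ENNReal.ofReal (w y) * ENNReal.ofReal (‖x - y‖ ^ (α - (d:ℝ))) := by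
    filter_upwards [huae] with x hx
    have hcong : (∫⁻ y, ENNReal.ofReal (v y) * ENNReal.ofReal (‖x - y‖ ^ (α - (d:ℝ))))
        = ∫⁻ y, ENNReal.ofReal (w y) * ENNReal.ofReal (‖x - y‖ ^ (α - (d:ℝ))) :=
      lintegral_congr_ae (hw_eq.mono fun y hy => by simp only [hy])
    calc ENNReal.ofReal (u x)
        ≤ ENNReal.ofReal κ *
            ∫⁻ y, ENNReal.ofReal (ε * v y * (1 - u y) * ‖x - y‖ ^ (α - (d:ℝ))) := by
          rw [hx, ENNReal.ofReal_mul hκ.le]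
          refine mul_le_mul_right (aux_ofReal_integral_le _ fun y => ?_) _
          have h1 : (0:ℝ) ≤ 1 - u y := by linarith [(hu01 y).2]
          exact mul_nonneg (mul_nonneg (mul_nonneg hε.le (hv0 y)) h1)
            (Real.rpow_nonneg (norm_nonneg _) _)
      _ ≤ ENNReal.ofReal κ * ∫⁻ y, ENNReal.ofReal ε *
            (ENNReal.ofReal (v y) * ENNReal.ofReal (‖x - y‖ ^ (α - (d:ℝ)))) := by
          refine mul_le_mul_right (lintegral_mono fun y => ?_) _
          rw [← ENNReal.ofReal_mul (hv0 y), ← ENNReal.ofReal_mul hε.le]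
          apply ENNReal.ofReal_le_ofReal
          have h1 : 1 - u y ≤ 1 := by linarith [(hu01 y).1]
          calc ε * v y * (1 - u y) * ‖x - y‖ ^ (α - (d:ℝ))
              ≤ ε * v y * 1 * ‖x - y‖ ^ (α - (d:ℝ)) := by
                apply mul_le_mul_of_nonneg_right _ (Real.rpow_nonneg (norm_nonneg _) _)
                exact mul_le_mul_of_nonneg_left h1 (mul_nonneg hε.le (hv0 y))
            _ = ε * (v y * ‖x - y‖ ^ (α - (d:ℝ))) := by ring
      _ = (ENNReal.ofReal κ * ENNReal.ofReal ε) *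
            ∫⁻ y, ENNReal.ofReal (w y) * ENNReal.ofReal (‖x - y‖ ^ (α - (d:ℝ))) := by
          rw [lintegral_const_mul' _ _ ENNReal.ofReal_ne_top, hcong, mul_assoc]
  -- main lintegral bound
  have hΦ : (∫⁻ x in B, ∫⁻ y,
        ENNReal.ofReal (w y) * ENNReal.ofReal (‖x - y‖ ^ (α - (d:ℝ)))) ≤
      C' * ENNReal.ofReal (∫ x : EuclideanSpace ℝ (Fin d), v x) := by
    have hswap : (∫⁻ x in B, ∫⁻ y,
          ENNReal.ofReal (w y) * ENNReal.ofReal (‖x - y‖ ^ (α - (d:ℝ)))) =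
        ∫⁻ y, ENNReal.ofReal (w y) *
          ∫⁻ x in B, ENNReal.ofReal (‖x - y‖ ^ (α - (d:ℝ))) := by
      rw [lintegral_lintegral_swap]
      · exact lintegral_congr fun y => lintegral_const_mul' _ _ ENNReal.ofReal_ne_top
      · exact ((hwmeas.comp measurable_snd).ennreal_ofReal.mul
          (by fun_prop :
            Measurable fun z : (EuclideanSpace ℝ (Fin d)) × (EuclideanSpace ℝ (Fin d)) =>
              ENNReal.ofReal (‖z.1 - z.2‖ ^ (α - (d:ℝ))))).aemeasurable
    calc (∫⁻ x in B, ∫⁻ y,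
          ENNReal.ofReal (w y) * ENNReal.ofReal (‖x - y‖ ^ (α - (d:ℝ))))
        = ∫⁻ y, ENNReal.ofReal (w y) *
            ∫⁻ x in B, ENNReal.ofReal (‖x - y‖ ^ (α - (d:ℝ))) := hswap
      _ ≤ ∫⁻ y, ENNReal.ofReal (w y) * C' :=
          lintegral_mono fun y => mul_le_mul_right (aux_kernel_bound d htneg B y) _
      _ = C' * ∫⁻ y, ENNReal.ofReal (w y) := by
          rw [lintegral_mul_const' _ _ hC'fin, mul_comm]
      _ = C' * ENNReal.ofReal (∫ x : EuclideanSpace ℝ (Fin d), v x) := by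
          congr 1
          rw [ofReal_integral_eq_lintegral_ofReal hv1 (Filter.Eventually.of_forall hv0)]
          exact (lintegral_congr_ae (hw_eq.mono fun y hy => by simp only [hy])).symm
  set M := κ * C₀ * ε * (∫ x : EuclideanSpace ℝ (Fin d), v x) with hMdef
  have hM0 : 0 ≤ M := by positivity
  have hBu : ∫ x in B, u x ≤ M := by
    have h1 : ∫ x in B, u x = (∫⁻ x in B, ENNReal.ofReal (u x)).toReal :=
      integral_eq_lintegral_of_nonneg_ae
        (Filter.Eventually.of_forall fun x => (hu01 x).1)
        humeas.aestronglyMeasurable.restrict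
    have hmain : (∫⁻ x in B, ENNReal.ofReal (u x)) ≤ ENNReal.ofReal M := by
      have hconst : (ENNReal.ofReal κ * ENNReal.ofReal ε : ℝ≥0∞) ≠ ∞ :=
        ENNReal.mul_ne_top ENNReal.ofReal_ne_top ENNReal.ofReal_ne_top
      have hM' : ENNReal.ofReal M = (ENNReal.ofReal κ * ENNReal.ofReal ε) *
          (C' * ENNReal.ofReal (∫ x : EuclideanSpace ℝ (Fin d), v x)) := by
        rw [hMdef, ENNReal.ofReal_mul (by positivity), ENNReal.ofReal_mul (by positivity),
          ENNReal.ofReal_mul hκ.le, ← ENNReal.ofReal_toReal hC'fin, ← hC₀def]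
        ring
      calc (∫⁻ x in B, ENNReal.ofReal (u x))
          ≤ ∫⁻ x in B, (ENNReal.ofReal κ * ENNReal.ofReal ε) *
              ∫⁻ y, ENNReal.ofReal (w y) * ENNReal.ofReal (‖x - y‖ ^ (α - (d:ℝ))) :=
            lintegral_mono_ae (ae_restrict_of_ae hae)
        _ = (ENNReal.ofReal κ * ENNReal.ofReal ε) * ∫⁻ x in B, ∫⁻ y,
              ENNReal.ofReal (w y) * ENNReal.ofReal (‖x - y‖ ^ (α - (d:ℝ))) :=
            lintegral_const_mul' _ _ hconst
        _ ≤ (ENNReal.ofReal κ * ENNReal.ofReal ε) *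
              (C' * ENNReal.ofReal (∫ x : EuclideanSpace ℝ (Fin d), v x)) :=
            mul_le_mul_right hΦ _
        _ = ENNReal.ofReal M := hM'.symm
    calc ∫ x in B, u x = (∫⁻ x in B, ENNReal.ofReal (u x)).toReal := h1
      _ ≤ (ENNReal.ofReal M).toReal := ENNReal.toReal_mono ENNReal.ofReal_ne_top hmain
      _ = M := ENNReal.toReal_ofReal hM0
  -- Hölder
  set g := B.indicator u with hgdef
  have hg0 : ∀ x, 0 ≤ g x := fun x => Set.indicator_nonneg (fun y _ => (hu01 y).1) x
  have hgq : MemLp g (ENNReal.ofReal q) := by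
    rw [hgdef, memLp_indicator_iff_restrict hBm]
    exact MemLp.of_bound humeas.aestronglyMeasurable.restrict 1
      (Filter.Eventually.of_forall fun x => by
        rw [Real.norm_eq_abs, abs_of_nonneg (hu01 x).1]; exact (hu01 x).2)
  have hconj : p.HolderConjugate q := Real.holderConjugate_iff.mpr ⟨hp, by simpa [one_div] using hpq⟩
  have hholder : ∫ x, v x * g x ≤
      (∫ x, v x ^ p) ^ (1/p) * (∫ x, g x ^ q) ^ (1/q) :=
    integral_mul_le_Lp_mul_Lq_of_nonneg hconj (Filter.Eventually.of_forall hv0)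
      (Filter.Eventually.of_forall hg0) hvp hgq
  have hvg : ∫ x, v x * u x = ∫ x, v x * g x := by
    refine integral_congr_ae (Filter.Eventually.of_forall fun x => ?_)
    by_cases hx : x ∈ B
    · simp only [hgdef, Set.indicator_of_mem hx]
    · have hvx : v x = 0 := by
        by_contra h
        exact hx (hsupp h)
      simp only [hgdef, Set.indicator_of_notMem hx, hvx, zero_mul]
  have hA0 : 0 ≤ ∫ x, g x ^ q :=
    integral_nonneg fun x => Real.rpow_nonneg (hg0 x) _
  have hgq_le : ∫ x, g x ^ q ≤ M := by
    have hbdd : ∀ f : EuclideanSpace ℝ (Fin d) → ℝ, Measurable f →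
        (∀ x, ‖f x‖ ≤ 1) → IntegrableOn f B := fun f hf hb =>
      Integrable.mono' (integrable_const 1) hf.aestronglyMeasurable.restrict
        (Filter.Eventually.of_forall hb)
    have e1 : ∫ x, g x ^ q = ∫ x in B, u x ^ q := by
      rw [← integral_indicator hBm]
      refine integral_congr_ae (Filter.Eventually.of_forall fun x => ?_)
      by_cases hx : x ∈ B
      · simp only [hgdef, Set.indicator_of_mem hx]
      · simp only [hgdef, Set.indicator_of_notMem hx, Real.zero_rpow hqne]
    have e2 : ∫ x in B, u x ^ q ≤ ∫ x in B, u x := by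
      refine setIntegral_mono_on
        (hbdd _ (by fun_prop) fun x => ?_)
        (hbdd _ humeas fun x => by
          rw [Real.norm_eq_abs, abs_of_nonneg (hu01 x).1]; exact (hu01 x).2)
        hBm fun x _ => ?_
      · rw [Real.norm_eq_abs, abs_of_nonneg (Real.rpow_nonneg (hu01 x).1 _)]
        exact Real.rpow_le_one (hu01 x).1 (hu01 x).2 hq0.le
      · rcases eq_or_lt_of_le (hu01 x).1 with h0 | h0
        · rw [← h0, Real.zero_rpow hqne]
        · calc u x ^ q ≤ u x ^ (1:ℝ) :=
              Real.rpow_le_rpow_of_exponent_ge h0 (hu01 x).2 hq1.le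
            _ = u x := Real.rpow_one _
    calc ∫ x, g x ^ q = ∫ x in B, u x ^ q := e1
      _ ≤ ∫ x in B, u x := e2
      _ ≤ M := hBu
  -- identify the Lp norm
  have hNp : (eLpNorm v (ENNReal.ofReal p)
      (volume : Measure (EuclideanSpace ℝ (Fin d)))).toReal = (∫ x, v x ^ p) ^ (1/p) := by
    rw [hvp.eLpNorm_eq_integral_rpow_norm
      (by simp only [ne_eq, ENNReal.ofReal_eq_zero, not_le]; exact hp0)
      ENNReal.ofReal_ne_top]
    simp only [ENNReal.toReal_ofReal hp0.le]
    rw [ENNReal.toReal_ofReal (Real.rpow_nonneg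
      (integral_nonneg fun x => Real.rpow_nonneg (norm_nonneg _) _) _), one_div]
    have hvint : (∫ x : EuclideanSpace ℝ (Fin d), ‖v x‖ ^ p) =
        ∫ x : EuclideanSpace ℝ (Fin d), v x ^ p :=
      integral_congr_ae (Filter.Eventually.of_forall fun x => by
        simp only [Real.norm_eq_abs, abs_of_nonneg (hv0 x)])
    rw [hvint]
  have hNp0 : 0 ≤ (∫ x, v x ^ p) ^ (1/p) :=
    Real.rpow_nonneg (integral_nonneg fun x => Real.rpow_nonneg (hv0 x) _) _
  have hMrpow : M ^ (1/q) =
      (κ * C₀) ^ (1/q) * (ε ^ (1/q) * (∫ x : EuclideanSpace ℝ (Fin d), v x) ^ (1/q)) := by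
    rw [hMdef, show κ * C₀ * ε * (∫ x : EuclideanSpace ℝ (Fin d), v x) =
        (κ * C₀) * (ε * (∫ x : EuclideanSpace ℝ (Fin d), v x)) by ring,
      Real.mul_rpow (by positivity) (by positivity), Real.mul_rpow hε.le hintv]
  constructor
  · rw [hdiff]
    exact mul_nonneg hε.le hvunn
  · rw [hdiff]
    calc ε * ∫ x, v x * u x
        ≤ ε * ((∫ x, v x ^ p) ^ (1/p) * M ^ (1/q)) := by
          apply mul_le_mul_of_nonneg_left _ hε.le
          rw [hvg]
          calc ∫ x, v x * g x
              ≤ (∫ x, v x ^ p) ^ (1/p) * (∫ x, g x ^ q) ^ (1/q) := hholder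
            _ ≤ (∫ x, v x ^ p) ^ (1/p) * M ^ (1/q) :=
                mul_le_mul_of_nonneg_left
                  (Real.rpow_le_rpow hA0 hgq_le hqinv0.le) hNp0
      _ = (κ * C₀) ^ (1/q) * ε ^ (1 + 1/q) *
            (eLpNorm v (ENNReal.ofReal p)
              (volume : Measure (EuclideanSpace ℝ (Fin d)))).toReal *
            (∫ x : EuclideanSpace ℝ (Fin d), v x) ^ (1/q) := by
          rw [hNp, hMrpow, Real.rpow_add hε, Real.rpow_one]
          ring
      _ ≤ ((κ * C₀) ^ (1/q) + 1) * ε ^ (1 + 1/q) *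
            (eLpNorm v (ENNReal.ofReal p)
              (volume : Measure (EuclideanSpace ℝ (Fin d)))).toReal *
            (∫ x : EuclideanSpace ℝ (Fin d), v x) ^ (1/q) := by
          have h1 : (κ * C₀) ^ (1/q) ≤ (κ * C₀) ^ (1/q) + 1 := by linarith
          have h2 : (0:ℝ) ≤ ε ^ (1 + 1/q) := Real.rpow_nonneg hε.le _
          have h3 : (0:ℝ) ≤ (eLpNorm v (ENNReal.ofReal p)
              (volume : Measure (EuclideanSpace ℝ (Fin d)))).toReal := ENNReal.toReal_nonneg
          have h4 : (0:ℝ) ≤ (∫ x : EuclideanSpace ℝ (Fin d), v x) ^ (1/q) :=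
            Real.rpow_nonneg hintv _
          gcongr
end

section
/- Let d ≥ 1, α ∈ (0,2) with α < d, κ > 0, let Ω ⊂ ℝᵈ be a bounded open set, let v ∈ L¹(ℝᵈ) be nonnegative, and let u be a capacitory potential of v with constant κ. Then there is a constant C = C(Ω,d,α,κ) > 0, independent of v and u, such that ∫_Ω (1−u(x))² dx ≥ |Ω| − 2C Γ(v), where |Ω| is the Lebesgue measure of Ω and Γ(v) = ∫_{ℝᵈ} v(x)(1−u(x)) dx is the scattering length. -/
open MeasureTheory ENNReal

/-- Uniform (in `y`) bound on `∫⁻ x in Ω, ‖x - y‖ ^ c` for `c < 0` with `d/c < -1`,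
proved via the layer cake formula. -/
lemma kernel_lintegral_le (d : ℕ) (c : ℝ) (hc : c < 0) (hs : (d : ℝ) / c < -1)
    {Ω : Set (EuclideanSpace ℝ (Fin d))} (hΩm : MeasurableSet Ω) {R : ℝ}
    (hΩR : Ω ⊆ Metric.closedBall 0 R) (y : EuclideanSpace ℝ (Fin d)) :
    ∫⁻ x in Ω, ENNReal.ofReal (‖x - y‖ ^ c) ≤
      volume (Metric.closedBall (0 : EuclideanSpace ℝ (Fin d)) R) +
        (∫⁻ t in Set.Ioi (1 : ℝ), ENNReal.ofReal (t ^ ((d : ℝ) / c))) *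
          volume (Metric.ball (0 : EuclideanSpace ℝ (Fin d)) 1) := by
  let E := EuclideanSpace ℝ (Fin d)
  have hmeas : Measurable fun x : E => ‖x - y‖ ^ c :=
    ((measurable_id.sub measurable_const).norm).pow measurable_const
  rw [lintegral_eq_lintegral_meas_le _
    (Filter.Eventually.of_forall fun x => Real.rpow_nonneg (norm_nonneg _) c)
    hmeas.aemeasurable]
  rw [← Set.Ioc_union_Ioi_eq_Ioi (zero_le_one (α := ℝ)),
    lintegral_union measurableSet_Ioi (Set.Ioc_disjoint_Ioi le_rfl)]
  have hres : ∀ S : Set E, (volume.restrict Ω) S ≤ volume (S ∩ Ω) := by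
    intro S
    rw [Measure.restrict_apply' hΩm]
  gcongr
  · -- small t part
    calc ∫⁻ t in Set.Ioc (0:ℝ) 1, (volume.restrict Ω) {x : E | t ≤ ‖x - y‖ ^ c}
        ≤ ∫⁻ _t in Set.Ioc (0:ℝ) 1, volume (Metric.closedBall (0 : E) R) := by
          refine setLIntegral_mono' measurableSet_Ioc fun t _ => ?_
          exact le_trans (hres _) (measure_mono ((Set.inter_subset_right).trans hΩR))
      _ = volume (Metric.closedBall (0 : E) R) * volume (Set.Ioc (0:ℝ) 1) :=
          setLIntegral_const _ _
      _ ≤ volume (Metric.closedBall (0 : E) R) := by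
          rw [Real.volume_Ioc]
          simp
  · -- large t part
    calc ∫⁻ t in Set.Ioi (1:ℝ), (volume.restrict Ω) {x : E | t ≤ ‖x - y‖ ^ c}
        ≤ ∫⁻ t in Set.Ioi (1:ℝ),
            ENNReal.ofReal (t ^ ((d : ℝ) / c)) * volume (Metric.ball (0 : E) 1) := by
          refine setLIntegral_mono' measurableSet_Ioi fun t ht => ?_
          have ht1 : (1:ℝ) < t := ht
          have ht0 : (0:ℝ) < t := lt_trans one_pos ht1
          have hsub : {x : E | t ≤ ‖x - y‖ ^ c} ⊆ Metric.closedBall y (t ^ (1 / c)) := by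
            intro x hx
            have hx' : t ≤ ‖x - y‖ ^ c := hx
            have hnorm_pos : 0 < ‖x - y‖ := by
              rcases eq_or_lt_of_le (norm_nonneg (x - y)) with h | h
              · exfalso
                rw [← h, Real.zero_rpow hc.ne] at hx'
                linarith
              · exact h
            have key2 : ‖x - y‖ ≤ t ^ (1 / c) := by
              have hrw : (‖x - y‖ ^ c) ^ (1 / c) = ‖x - y‖ := by
                rw [← Real.rpow_mul (norm_nonneg _), mul_one_div_cancel hc.ne, Real.rpow_one]
              have := Real.rpow_le_rpow_of_nonpos ht0 hx'
                (div_nonpos_of_nonneg_of_nonpos zero_le_one hc.le)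
              rwa [hrw] at this
            exact mem_closedBall_iff_norm.2 key2
          calc (volume.restrict Ω) {x : E | t ≤ ‖x - y‖ ^ c}
              ≤ volume (Metric.closedBall y (t ^ (1 / c))) :=
                le_trans (hres _) (measure_mono (Set.inter_subset_left.trans hsub))
            _ = ENNReal.ofReal ((t ^ (1/c)) ^ Module.finrank ℝ (EuclideanSpace ℝ (Fin d))) * volume (Metric.ball (0:E) 1) :=
                Measure.addHaar_closedBall _ _ (Real.rpow_nonneg ht0.le _)
            _ = ENNReal.ofReal (t ^ ((d : ℝ) / c)) * volume (Metric.ball (0:E) 1) := by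
                congr 1
                rw [← Real.rpow_natCast (t ^ (1/c)) (Module.finrank ℝ (EuclideanSpace ℝ (Fin d))),
                  ← Real.rpow_mul ht0.le]
                congr 1
                rw [finrank_euclideanSpace_fin, one_div_mul_eq_div]
      _ = (∫⁻ t in Set.Ioi (1:ℝ), ENNReal.ofReal (t ^ ((d : ℝ) / c))) *
            volume (Metric.ball (0 : E) 1) :=
          lintegral_mul_const' _ _ measure_ball_lt_top.ne

/-- For a bounded open set `Ω ⊂ ℝᵈ` there is a constant
`C = C(Ω,d,α,κ) > 0`, independent of `v` and `u`, such that
`∫_Ω (1-u)² ≥ |Ω| - 2C Γ(v)`, where `Γ(v) = ∫ v (1-u)`. -/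
theorem integral_one_sub_potential_sq_ge (d : ℕ) (hd : 1 ≤ d) (α κ : ℝ)
    (hα0 : 0 < α) (hα2 : α < 2) (hαd : α < d) (hκ : 0 < κ)
    (Ω : Set (EuclideanSpace ℝ (Fin d))) (hΩo : IsOpen Ω)
    (hΩb : Bornology.IsBounded Ω) :
    ∃ C > (0 : ℝ), ∀ v u : EuclideanSpace ℝ (Fin d) → ℝ,
      Integrable v → (∀ x, 0 ≤ v x) → IsCapacitoryPotential d α κ v u →
        (volume Ω).toReal - 2 * C * (∫ x : EuclideanSpace ℝ (Fin d), v x * (1 - u x)) ≤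
          ∫ x in Ω, (1 - u x) ^ 2 := by
  classical
  let E := EuclideanSpace ℝ (Fin d)
  set c : ℝ := α - d with hc_def
  have hc : c < 0 := by rw [hc_def]; linarith
  have hs : (d : ℝ) / c < -1 := by
    rw [div_lt_iff_of_neg hc, hc_def]
    linarith
  obtain ⟨R, hR0, hΩR⟩ := hΩb.subset_closedBall_lt 0 0
  -- the uniform kernel bound
  set J : ℝ≥0∞ := ∫⁻ t in Set.Ioi (1 : ℝ), ENNReal.ofReal (t ^ ((d : ℝ) / c)) with hJ_def
  have hJ_lt : J < ∞ := (integrableOn_Ioi_rpow_of_lt hs one_pos).lintegral_lt_top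
  set M : ℝ≥0∞ := volume (Metric.closedBall (0 : E) R) + J * volume (Metric.ball (0 : E) 1)
    with hM_def
  have hM_ne : M ≠ ∞ := by
    refine ENNReal.add_ne_top.2 ⟨measure_closedBall_lt_top.ne, ?_⟩
    exact (ENNReal.mul_lt_top hJ_lt measure_ball_lt_top).ne
  have hM_pos : 0 < M :=
    lt_of_lt_of_le (Metric.measure_closedBall_pos volume 0 hR0) le_self_add
  have hΩmeas : MeasurableSet Ω := hΩo.measurableSet
  have hΩfin : volume Ω ≠ ∞ :=
    (lt_of_le_of_lt (measure_mono hΩR) measure_closedBall_lt_top).ne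
  haveI : IsFiniteMeasure (volume.restrict Ω) :=
    ⟨by rwa [Measure.restrict_apply_univ, lt_top_iff_ne_top]⟩
  have hkernel : ∀ y : E, ∫⁻ x in Ω, ENNReal.ofReal (‖x - y‖ ^ c) ≤ M :=
    fun y => kernel_lintegral_le d c hc hs hΩmeas hΩR y
  refine ⟨κ * M.toReal, mul_pos hκ (ENNReal.toReal_pos hM_pos.ne' hM_ne), ?_⟩
  intro v u hv hv0 hcap
  obtain ⟨hu_meas, hu_bnd, hu_eq⟩ := hcap
  -- measurable nonnegative a.e.-representative of v
  set vm : E → ℝ := fun y => max (hv.1.mk v y) 0 with hvm_def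
  have hvm_meas : Measurable vm := hv.1.measurable_mk.max measurable_const
  have hvm_nonneg : ∀ y, 0 ≤ vm y := fun y => le_max_right _ _
  have hvm_ae : v =ᵐ[volume] vm := by
    filter_upwards [hv.1.ae_eq_mk] with y hy
    show v y = max (hv.1.mk v y) 0
    rw [← hy]
    exact (max_eq_left (hv0 y)).symm
  set g : E → ℝ := fun y => vm y * (1 - u y) with hg_def
  have hg_meas : Measurable g := hvm_meas.mul (measurable_const.sub hu_meas)
  have hg_nonneg : ∀ y, 0 ≤ g y :=
    fun y => mul_nonneg (hvm_nonneg y) (by linarith [(hu_bnd y).2])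
  have hg_ae : (fun y => v y * (1 - u y)) =ᵐ[volume] g := by
    filter_upwards [hvm_ae] with y hy
    show v y * (1 - u y) = vm y * (1 - u y)
    rw [hy]
  set G : ℝ≥0∞ := ∫⁻ y, ENNReal.ofReal (g y) with hG_def
  have hG_lt : G < ∞ := by
    have h1 : G ≤ ∫⁻ y, ENNReal.ofReal (v y) := by
      have he : (∫⁻ y, ENNReal.ofReal (v y)) = ∫⁻ y, ENNReal.ofReal (vm y) :=
        lintegral_congr_ae (hvm_ae.mono fun y hy => by dsimp only; rw [hy])
      rw [hG_def, he]
      refine lintegral_mono fun y => ENNReal.ofReal_le_ofReal ?_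
      calc g y ≤ vm y * 1 := by
            apply mul_le_mul_of_nonneg_left _ (hvm_nonneg y)
            linarith [(hu_bnd y).1]
        _ = vm y := mul_one _
    exact lt_of_le_of_lt h1 hv.lintegral_lt_top
  have hΓ : (∫ x, v x * (1 - u x)) = G.toReal := by
    rw [show (∫ x, v x * (1 - u x)) = ∫ x, g x from integral_congr_ae hg_ae]
    rw [integral_eq_lintegral_of_nonneg_ae (Filter.Eventually.of_forall hg_nonneg)
      hg_meas.aestronglyMeasurable]
  -- key pointwise a.e. bound
  have hker_meas : Measurable fun p : E × E => ENNReal.ofReal (‖p.1 - p.2‖ ^ c) :=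
    (((measurable_fst.sub measurable_snd).norm).pow measurable_const).ennreal_ofReal
  have key : ∀ᵐ x : E, ENNReal.ofReal (u x) ≤
      ENNReal.ofReal κ * ∫⁻ y, ENNReal.ofReal (g y) * ENNReal.ofReal (‖x - y‖ ^ c) := by
    filter_upwards [hu_eq] with x hx
    have hcong : (∫ y, v y * (1 - u y) * ‖x - y‖ ^ c) = ∫ y, g y * ‖x - y‖ ^ c := by
      refine integral_congr_ae (hg_ae.mono fun y hy => ?_)
      exact congrArg (fun r => r * ‖x - y‖ ^ c) hy
    have hmeasy : Measurable fun y : E => g y * ‖x - y‖ ^ c :=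
      hg_meas.mul (((measurable_const.sub measurable_id).norm).pow measurable_const)
    have hrepr : (∫ y, g y * ‖x - y‖ ^ c) =
        (∫⁻ y, ENNReal.ofReal (g y * ‖x - y‖ ^ c)).toReal :=
      integral_eq_lintegral_of_nonneg_ae
        (Filter.Eventually.of_forall fun y =>
          mul_nonneg (hg_nonneg y) (Real.rpow_nonneg (norm_nonneg _) _))
        hmeasy.aestronglyMeasurable
    have hofReal_mul : ∀ y : E, ENNReal.ofReal (g y * ‖x - y‖ ^ c) =
        ENNReal.ofReal (g y) * ENNReal.ofReal (‖x - y‖ ^ c) :=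
      fun y => ENNReal.ofReal_mul (hg_nonneg y)
    calc ENNReal.ofReal (u x)
        = ENNReal.ofReal (κ * (∫⁻ y, ENNReal.ofReal (g y * ‖x - y‖ ^ c)).toReal) := by
          rw [hx, hcong, hrepr]
      _ = ENNReal.ofReal κ *
            ENNReal.ofReal (∫⁻ y, ENNReal.ofReal (g y * ‖x - y‖ ^ c)).toReal :=
          ENNReal.ofReal_mul hκ.le
      _ ≤ ENNReal.ofReal κ * ∫⁻ y, ENNReal.ofReal (g y * ‖x - y‖ ^ c) :=
          mul_le_mul_right ENNReal.ofReal_toReal_le _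
      _ = ENNReal.ofReal κ * ∫⁻ y, ENNReal.ofReal (g y) * ENNReal.ofReal (‖x - y‖ ^ c) := by
          rw [lintegral_congr fun y => hofReal_mul y]
  -- Tonelli and the kernel bound
  have huΩ_le : ∫⁻ x in Ω, ENNReal.ofReal (u x) ≤ ENNReal.ofReal κ * (G * M) := by
    have hprod_meas : Measurable fun p : E × E =>
        ENNReal.ofReal (g p.2) * ENNReal.ofReal (‖p.1 - p.2‖ ^ c) :=
      ((hg_meas.comp measurable_snd).ennreal_ofReal).mul hker_meas
    calc ∫⁻ x in Ω, ENNReal.ofReal (u x)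
        ≤ ∫⁻ x in Ω, ENNReal.ofReal κ *
            ∫⁻ y, ENNReal.ofReal (g y) * ENNReal.ofReal (‖x - y‖ ^ c) :=
          lintegral_mono_ae (ae_restrict_of_ae key)
      _ = ENNReal.ofReal κ * ∫⁻ x in Ω,
            ∫⁻ y, ENNReal.ofReal (g y) * ENNReal.ofReal (‖x - y‖ ^ c) :=
          lintegral_const_mul' _ _ ENNReal.ofReal_ne_top
      _ = ENNReal.ofReal κ * ∫⁻ y,
            ∫⁻ x in Ω, ENNReal.ofReal (g y) * ENNReal.ofReal (‖x - y‖ ^ c) := by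
          rw [lintegral_lintegral_swap hprod_meas.aemeasurable]
      _ = ENNReal.ofReal κ * ∫⁻ y, ENNReal.ofReal (g y) *
            ∫⁻ x in Ω, ENNReal.ofReal (‖x - y‖ ^ c) := by
          rw [lintegral_congr fun y => lintegral_const_mul' _ _ ENNReal.ofReal_ne_top]
      _ ≤ ENNReal.ofReal κ * ∫⁻ y, ENNReal.ofReal (g y) * M := by
          gcongr with y
          exact hkernel y
      _ = ENNReal.ofReal κ * (G * M) := by
          rw [lintegral_mul_const' _ _ hM_ne]
  -- back to real integrals
  have hIntu : IntegrableOn u Ω := by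
    refine Integrable.mono' (integrable_const (1:ℝ))
      hu_meas.aestronglyMeasurable.restrict
      (Filter.Eventually.of_forall fun x => ?_)
    rw [Real.norm_eq_abs, abs_le]
    exact ⟨by linarith [(hu_bnd x).1], (hu_bnd x).2⟩
  have huΩ_repr : ∫ x in Ω, u x = (∫⁻ x in Ω, ENNReal.ofReal (u x)).toReal :=
    integral_eq_lintegral_of_nonneg_ae (Filter.Eventually.of_forall fun x => (hu_bnd x).1)
      hu_meas.aestronglyMeasurable.restrict
  have huΩ_real : ∫ x in Ω, u x ≤ κ * M.toReal * G.toReal := by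
    rw [huΩ_repr]
    have hne : ENNReal.ofReal κ * (G * M) ≠ ∞ :=
      ENNReal.mul_ne_top ENNReal.ofReal_ne_top (ENNReal.mul_ne_top hG_lt.ne hM_ne)
    calc (∫⁻ x in Ω, ENNReal.ofReal (u x)).toReal
        ≤ (ENNReal.ofReal κ * (G * M)).toReal := ENNReal.toReal_mono hne huΩ_le
      _ = κ * M.toReal * G.toReal := by
          rw [ENNReal.toReal_mul, ENNReal.toReal_mul, ENNReal.toReal_ofReal hκ.le]
          ring
  -- pointwise inequality (1-u)^2 ≥ 1 - 2u and integration over Ω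
  have hInt1 : IntegrableOn (fun x => (1 - u x) ^ 2) Ω := by
    refine Integrable.mono' (integrable_const (1:ℝ))
      (((measurable_const.sub hu_meas).pow_const 2).aestronglyMeasurable.restrict)
      (Filter.Eventually.of_forall fun x => ?_)
    rw [Real.norm_eq_abs, abs_le]
    constructor <;> nlinarith [(hu_bnd x).1, (hu_bnd x).2]
  have hInt2 : IntegrableOn (fun x => 1 - 2 * u x) Ω :=
    (integrable_const (1:ℝ)).sub (hIntu.const_mul 2)
  have hmono : ∫ x in Ω, (1 - 2 * u x) ≤ ∫ x in Ω, (1 - u x) ^ 2 := by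
    refine integral_mono_ae hInt2 hInt1 (Filter.Eventually.of_forall fun x => ?_)
    show (1:ℝ) - 2 * u x ≤ (1 - u x) ^ 2
    nlinarith [sq_nonneg (u x)]
  have hsplit : ∫ x in Ω, (1 - 2 * u x) = (volume Ω).toReal - 2 * ∫ x in Ω, u x := by
    rw [integral_sub (integrable_const (1:ℝ)) (hIntu.const_mul 2)]
    rw [integral_const_mul, setIntegral_const]
    simp [smul_eq_mul, Measure.real]
  rw [hΓ]
  have : 2 * (κ * M.toReal) * G.toReal = 2 * (κ * M.toReal * G.toReal) := by ring
  linarith [hmono, hsplit, huΩ_real]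
end

section
/- Let d ≥ 1 and α ∈ (0,2) with α < d, and let c > 0. Then there is a constant C = C(c,d,α) > 0 such that for every t > 0, every x, z ∈ ℝᵈ, and every measurable function p : ℝᵈ → [0,∞) satisfying p(y) ≤ c t^{−d/α} for all y and p(y) ≤ c t |x−y|^{−d−α} for all y ≠ x, one has ∫_{ℝᵈ} p(y) |y−z|^{α−d} dy ≤ C (t^{1−d/α} + t^{−(d−α)/α}). In particular, since the transition density p(t,x,·) of the symmetric α-stable process satisfies both bounds, lim_{t→∞} sup_{x,z ∈ ℝᵈ} ∫_{ℝᵈ} p(t,x,y) |y−z|^{α−d} dy = 0. -/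
open MeasureTheory ENNReal Filter

section Aux
open Metric Set


lemma my_scale {d : ℕ} (β r : ℝ) (hr : 0 < r) {s : Set (EuclideanSpace ℝ (Fin d))}
    (hs : MeasurableSet s) :
    ∫⁻ y in s, ENNReal.ofReal (‖y‖ ^ β) =
      ENNReal.ofReal (r ^ ((d : ℝ) + β)) *
        ∫⁻ y in (r • ·) ⁻¹' s, ENNReal.ofReal (‖y‖ ^ β) := by
  set F : EuclideanSpace ℝ (Fin d) → ℝ≥0∞ := fun y => ENNReal.ofReal (‖y‖ ^ β) with hF
  have hFm : Measurable F := ENNReal.measurable_ofReal.comp (measurable_norm.pow_const _)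
  have hGm : Measurable (s.indicator F) := hFm.indicator hs
  have hrd : (0:ℝ) < r ^ d := pow_pos hr d
  have hmap : ∫⁻ y, s.indicator F y ∂(Measure.map (r • ·) volume) =
      ∫⁻ y, s.indicator F (r • y) := lintegral_map hGm (measurable_const_smul r)
  rw [Measure.map_addHaar_smul volume hr.ne'] at hmap
  rw [lintegral_smul_measure] at hmap
  have hkey : ∀ y : EuclideanSpace ℝ (Fin d),
      s.indicator F (r • y) =
        ENNReal.ofReal (r ^ β) * ((r • ·) ⁻¹' s).indicator F y := by
    intro y
    by_cases h : r • y ∈ s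
    · rw [Set.indicator_of_mem h, Set.indicator_of_mem (by simpa using h)]
      simp only [hF]
      rw [norm_smul, Real.norm_eq_abs, abs_of_pos hr,
        Real.mul_rpow hr.le (norm_nonneg y), ENNReal.ofReal_mul (Real.rpow_nonneg hr.le β)]
    · rw [Set.indicator_of_notMem h, Set.indicator_of_notMem (by simpa using h), mul_zero]
  simp only [hkey] at hmap
  rw [lintegral_const_mul _ (hFm.indicator ((measurable_const_smul r) hs))] at hmap
  rw [lintegral_indicator hs, lintegral_indicator ((measurable_const_smul r) hs)] at hmap
  rw [finrank_euclideanSpace_fin] at hmap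
  rw [abs_of_pos (inv_pos.mpr hrd)] at hmap
  have h1 : ENNReal.ofReal (r ^ d) * (ENNReal.ofReal ((r ^ d)⁻¹) * ∫⁻ y in s, F y)
      = ∫⁻ y in s, F y := by
    rw [← mul_assoc, ← ENNReal.ofReal_mul hrd.le, mul_inv_cancel₀ hrd.ne', ENNReal.ofReal_one,
      one_mul]
  calc ∫⁻ y in s, F y
      = ENNReal.ofReal (r ^ d) * (ENNReal.ofReal ((r ^ d)⁻¹) * ∫⁻ y in s, F y) := h1.symm
    _ = ENNReal.ofReal (r ^ d) *
        (ENNReal.ofReal (r ^ β) * ∫⁻ y in (r • ·) ⁻¹' s, F y) := by rw [smul_eq_mul] at hmap; rw [hmap]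
    _ = ENNReal.ofReal (r ^ ((d : ℝ) + β)) * ∫⁻ y in (r • ·) ⁻¹' s, F y := by
        rw [← mul_assoc, ← ENNReal.ofReal_mul hrd.le, Real.rpow_add hr, Real.rpow_natCast]


variable {d : ℕ}

lemma my_translate (β : ℝ) {s : Set (EuclideanSpace ℝ (Fin d))} (hs : MeasurableSet s)
    (z : EuclideanSpace ℝ (Fin d)) :
    ∫⁻ y in {y | y - z ∈ s}, ENNReal.ofReal (‖y - z‖ ^ β) =
      ∫⁻ y in s, ENNReal.ofReal (‖y‖ ^ β) := by
  set F : EuclideanSpace ℝ (Fin d) → ℝ≥0∞ := fun y => ENNReal.ofReal (‖y‖ ^ β) with hF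
  have hFm : Measurable F := ENNReal.measurable_ofReal.comp (measurable_norm.pow_const _)
  have h1 : ∫⁻ y, s.indicator F (y - z) = ∫⁻ y, s.indicator F y := by
    simpa [sub_eq_add_neg] using lintegral_add_right_eq_self (s.indicator F) (-z)
  have h2 : ∀ y : EuclideanSpace ℝ (Fin d),
      s.indicator F (y - z) = ({y | y - z ∈ s} : Set _).indicator
        (fun y => ENNReal.ofReal (‖y - z‖ ^ β)) y := by
    intro y
    by_cases h : y - z ∈ s
    · have h' : y ∈ {y | y - z ∈ s} := h
      rw [Set.indicator_of_mem h, Set.indicator_of_mem h']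
    · have h' : y ∉ {y | y - z ∈ s} := h
      rw [Set.indicator_of_notMem h, Set.indicator_of_notMem h']
  simp_rw [h2] at h1
  have hsz : MeasurableSet {y : EuclideanSpace ℝ (Fin d) | y - z ∈ s} :=
    (measurable_sub_const z) hs
  rw [lintegral_indicator hsz, lintegral_indicator hs] at h1
  exact h1


lemma my_A1_finite (d : ℕ) (hd : 1 ≤ d) (α : ℝ) (hα0 : 0 < α) (hαd : α < d) :
    ∫⁻ y in Metric.ball (0 : EuclideanSpace ℝ (Fin d)) 1,
      ENNReal.ofReal (‖y‖ ^ (α - d)) < ∞ := by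
  classical
  haveI : Nonempty (Fin d) := ⟨⟨0, hd⟩⟩
  haveI : Nontrivial (EuclideanSpace ℝ (Fin d)) :=
    inferInstanceAs (Nontrivial (PiLp 2 fun _ : Fin d => ℝ))
  set E := EuclideanSpace ℝ (Fin d)
  set F : E → ℝ≥0∞ := fun y => ENNReal.ofReal (‖y‖ ^ (α - d)) with hF
  set c : ℕ → ℝ := fun n => (2 : ℝ) ^ (-(n : ℝ)) with hc
  have hcpos : ∀ n, 0 < c n := fun n => Real.rpow_pos_of_pos two_pos _
  set D : ℕ → Set E := fun n => {y : E | (2 : ℝ) ^ (-(n : ℝ) - 1) ≤ ‖y‖} ∩ Metric.ball 0 (c n)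
    with hD
  have hcsucc : ∀ n : ℕ, (2 : ℝ) ^ (-(n : ℝ) - 1) = c (n + 1) := by
    intro n
    simp only [hc]
    push_cast
    ring_nf
  -- covering
  have hcover : Metric.ball (0 : E) 1 ⊆ {0} ∪ ⋃ n, D n := by
    intro y hy
    rw [mem_ball_zero_iff] at hy
    by_cases h0 : y = 0
    · exact Or.inl h0
    · refine Or.inr ?_
      have hypos : 0 < ‖y‖ := norm_pos_iff.mpr h0
      have hP : ∃ n : ℕ, (2 : ℝ) ^ (-(n : ℝ) - 1) ≤ ‖y‖ := by
        obtain ⟨n, hn⟩ := exists_pow_lt_of_lt_one hypos (by norm_num : (1:ℝ)/2 < 1)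
        refine ⟨n, ?_⟩
        rw [hcsucc n]
        have : c (n + 1) = (1/2 : ℝ) ^ (n+1) := by
          simp only [hc]
          rw [← Real.rpow_natCast ((1:ℝ)/2) (n+1), one_div,
            Real.inv_rpow (by norm_num), ← Real.rpow_neg (by norm_num)]
        rw [this]
        calc ((1:ℝ)/2) ^ (n+1) ≤ (1/2) ^ n :=
              pow_le_pow_of_le_one (by norm_num) (by norm_num) (Nat.le_succ n)
          _ ≤ ‖y‖ := hn.le
      set n := Nat.find hP with hn
      have h1 : (2 : ℝ) ^ (-(n : ℝ) - 1) ≤ ‖y‖ := Nat.find_spec hP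
      have h2 : ‖y‖ < c n := by
        rcases n.eq_zero_or_eq_succ_pred with h | h
        · rw [h]; simpa [hc] using hy
        · have hm := Nat.find_min hP (m := n - 1) (by omega)
          push_neg at hm
          have : (2:ℝ) ^ (-((n-1 : ℕ) : ℝ) - 1) = c n := by
            rw [hcsucc (n-1)]; congr 1; omega
          rwa [this] at hm
      exact mem_iUnion.mpr ⟨n, ⟨h1, mem_ball_zero_iff.mpr h2⟩⟩
  set v := volume (Metric.ball (0 : E) 1) with hv
  have hvlt : v < ∞ := measure_ball_lt_top
  set q : ℝ≥0∞ := ENNReal.ofReal ((2:ℝ) ^ (-α)) with hq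
  have hqlt : q < 1 := by
    rw [hq, ← ENNReal.ofReal_one]
    exact ENNReal.ofReal_lt_ofReal_iff_of_nonneg (by positivity) |>.mpr
      (Real.rpow_lt_one_of_one_lt_of_neg one_lt_two (by linarith))
  -- bound on each annulus
  have hDn : ∀ n : ℕ, ∫⁻ y in D n, F y ≤
      ENNReal.ofReal ((2:ℝ) ^ ((d : ℝ) - α)) * v * q ^ n := by
    intro n
    have hL : (0:ℝ) < (2:ℝ) ^ (-(n:ℝ) - 1) := Real.rpow_pos_of_pos two_pos _
    have hptwise : ∀ y ∈ D n, F y ≤ ENNReal.ofReal (((2:ℝ) ^ (-(n:ℝ)-1)) ^ (α - d)) := by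
      intro y hy
      exact ENNReal.ofReal_le_ofReal
        (Real.rpow_le_rpow_of_nonpos hL hy.1 (by linarith [hαd]))
    calc ∫⁻ y in D n, F y
        ≤ ∫⁻ _ in D n, ENNReal.ofReal (((2:ℝ) ^ (-(n:ℝ)-1)) ^ (α - d)) :=
          setLIntegral_mono' (by
            apply MeasurableSet.inter
            · exact measurableSet_le measurable_const measurable_norm
            · exact measurableSet_ball) hptwise
      _ = ENNReal.ofReal (((2:ℝ) ^ (-(n:ℝ)-1)) ^ (α - d)) * volume (D n) := by
          rw [setLIntegral_const]
      _ ≤ ENNReal.ofReal (((2:ℝ) ^ (-(n:ℝ)-1)) ^ (α - d)) * volume (Metric.ball (0:E) (c n)) := by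
          gcongr
          exact inter_subset_right
      _ = ENNReal.ofReal (((2:ℝ) ^ (-(n:ℝ)-1)) ^ (α - d)) *
            (ENNReal.ofReal (c n ^ d) * v) := by
          rw [Measure.addHaar_ball volume 0 (hcpos n).le, finrank_euclideanSpace_fin]
      _ = ENNReal.ofReal ((2:ℝ) ^ ((d : ℝ) - α)) * v * q ^ n := by
          have e1 : ((2:ℝ) ^ (-(n:ℝ)-1)) ^ (α - d) = (2:ℝ) ^ ((-(n:ℝ)-1) * (α - d)) := by
            rw [← Real.rpow_mul (by norm_num)]
          have e2 : (c n : ℝ) ^ d = (2:ℝ) ^ (-(n:ℝ) * d) := by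
            rw [hc, ← Real.rpow_natCast ((2:ℝ) ^ (-(n:ℝ))) d, ← Real.rpow_mul (by norm_num)]
          have e3 : (((2:ℝ) ^ (-α)) ^ n) = (2:ℝ) ^ (-α * n) := by
            rw [← Real.rpow_natCast ((2:ℝ) ^ (-α)) n, ← Real.rpow_mul (by norm_num)]
          have e : ((2:ℝ) ^ (-(n:ℝ)-1)) ^ (α - d) * (c n ^ d)
              = (2:ℝ)^((d:ℝ)-α) * ((2:ℝ)^(-α))^n := by
            rw [e1, e2, e3, ← Real.rpow_add two_pos, ← Real.rpow_add two_pos]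
            congr 1
            ring
          rw [hq, ← ENNReal.ofReal_pow (by positivity)]
          calc ENNReal.ofReal (((2:ℝ) ^ (-(n:ℝ)-1)) ^ (α - d)) * (ENNReal.ofReal (c n ^ d) * v)
              = ENNReal.ofReal (((2:ℝ) ^ (-(n:ℝ)-1)) ^ (α - d) * (c n ^ d)) * v := by
                rw [ENNReal.ofReal_mul (Real.rpow_nonneg hL.le _)]; ring
            _ = ENNReal.ofReal ((2:ℝ)^((d:ℝ)-α) * ((2:ℝ)^(-α))^n) * v := by rw [e]
            _ = ENNReal.ofReal ((2:ℝ)^((d:ℝ)-α)) * v * ENNReal.ofReal (((2:ℝ)^(-α))^n) := by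
                rw [ENNReal.ofReal_mul (by positivity)]; ring
  calc ∫⁻ y in Metric.ball (0:E) 1, F y
      ≤ ∫⁻ y in {(0:E)} ∪ ⋃ n, D n, F y := lintegral_mono_set hcover
    _ ≤ (∫⁻ y in {(0:E)}, F y) + ∫⁻ y in ⋃ n, D n, F y := lintegral_union_le _ _ _
    _ ≤ 0 + ∑' n, ∫⁻ y in D n, F y := by
        gcongr
        · exact le_of_eq (setLIntegral_measure_zero _ _ (measure_singleton 0))
        · exact lintegral_iUnion_le _ _
    _ ≤ 0 + ∑' n, ENNReal.ofReal ((2:ℝ) ^ ((d : ℝ) - α)) * v * q ^ n := by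
        gcongr
        exact hDn _
    _ < ∞ := by
        rw [zero_add, ENNReal.tsum_mul_left, ENNReal.tsum_geometric]
        refine ENNReal.mul_lt_top (ENNReal.mul_lt_top ofReal_lt_top hvlt) ?_
        rw [lt_top_iff_ne_top, Ne, ENNReal.inv_eq_top, tsub_eq_zero_iff_le]
        exact fun h => absurd h (not_le.mpr hqlt)


lemma my_B1_finite (d : ℕ) (α : ℝ) (hα0 : 0 < α) :
    ∫⁻ y in (Metric.ball (0 : EuclideanSpace ℝ (Fin d)) 1)ᶜ,
      ENNReal.ofReal (‖y‖ ^ (-(d : ℝ) - α)) < ∞ := by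
  set E := EuclideanSpace ℝ (Fin d)
  set s : ℝ := (d : ℝ) + α with hs
  have hds : (Module.finrank ℝ E : ℝ) < s := by
    rw [finrank_euclideanSpace_fin]; simp only [hs]; linarith
  have hs0 : 0 < s := by positivity
  have hpt : ∀ y : E, y ∈ (Metric.ball (0:E) 1)ᶜ →
      ENNReal.ofReal (‖y‖ ^ (-(d : ℝ) - α)) ≤
        ENNReal.ofReal ((2:ℝ) ^ s * (1 + ‖y‖) ^ (-s)) := by
    intro y hy
    have hy1 : (1:ℝ) ≤ ‖y‖ := by
      simpa [mem_ball_zero_iff] using hy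
    have hy0 : (0:ℝ) < ‖y‖ := lt_of_lt_of_le one_pos hy1
    apply ENNReal.ofReal_le_ofReal
    have h1 : ((2:ℝ) * ‖y‖) ^ (-s) ≤ (1 + ‖y‖) ^ (-s) :=
      Real.rpow_le_rpow_of_nonpos (by positivity) (by linarith) (by linarith)
    have h2 : ((2:ℝ) * ‖y‖) ^ (-s) = (2:ℝ) ^ (-s) * ‖y‖ ^ (-s) :=
      Real.mul_rpow (by norm_num) (norm_nonneg y)
    have h3 : ‖y‖ ^ (-(d:ℝ) - α) = ‖y‖ ^ (-s) := by rw [hs]; ring_nf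
    rw [h3]
    have h4 : (2:ℝ) ^ s * ((2:ℝ) ^ (-s) * ‖y‖ ^ (-s)) = ‖y‖ ^ (-s) := by
      rw [← mul_assoc, ← Real.rpow_add two_pos]
      simp
    calc ‖y‖ ^ (-s) = (2:ℝ) ^ s * ((2:ℝ) * ‖y‖) ^ (-s) := by rw [h2, h4]
      _ ≤ (2:ℝ) ^ s * (1 + ‖y‖) ^ (-s) := by
          have : (0:ℝ) ≤ (2:ℝ) ^ s := by positivity
          exact mul_le_mul_of_nonneg_left h1 this
  calc ∫⁻ y in (Metric.ball (0:E) 1)ᶜ, ENNReal.ofReal (‖y‖ ^ (-(d : ℝ) - α))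
      ≤ ∫⁻ y in (Metric.ball (0:E) 1)ᶜ, ENNReal.ofReal ((2:ℝ) ^ s * (1 + ‖y‖) ^ (-s)) :=
        setLIntegral_mono' measurableSet_ball.compl hpt
    _ ≤ ∫⁻ y : E, ENNReal.ofReal ((2:ℝ) ^ s * (1 + ‖y‖) ^ (-s)) :=
        setLIntegral_le_lintegral _ _
    _ = ENNReal.ofReal ((2:ℝ) ^ s) * ∫⁻ y : E, ENNReal.ofReal ((1 + ‖y‖) ^ (-s)) := by
        simp_rw [ENNReal.ofReal_mul (by positivity : (0:ℝ) ≤ (2:ℝ) ^ s)]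
        rw [lintegral_const_mul _ (by
          exact ENNReal.measurable_ofReal.comp
            ((measurable_const.add measurable_norm).pow_const _))]
    _ < ∞ := ENNReal.mul_lt_top ofReal_lt_top (finite_integral_one_add_norm hds)

lemma my_main (d : ℕ) (hd : 1 ≤ d) (α : ℝ) (hα0 : 0 < α) (hαd : α < d) (c : ℝ) (hc : 0 < c) :
    ∃ C > (0 : ℝ), ∀ t > (0 : ℝ), ∀ x z : EuclideanSpace ℝ (Fin d),
      ∀ p : EuclideanSpace ℝ (Fin d) → ℝ, Measurable p → (∀ y, 0 ≤ p y) →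
        (∀ y, p y ≤ c * t ^ (-(d : ℝ) / α)) →
        (∀ y, y ≠ x → p y ≤ c * t * ‖x - y‖ ^ (-(d : ℝ) - α)) →
        (∫⁻ y : EuclideanSpace ℝ (Fin d),
            ENNReal.ofReal (p y * ‖y - z‖ ^ (α - d))) ≤
          ENNReal.ofReal (C * t ^ (1 - (d : ℝ) / α)) := by
  classical
  haveI : Nonempty (Fin d) := ⟨⟨0, hd⟩⟩
  haveI : Nontrivial (EuclideanSpace ℝ (Fin d)) :=
    inferInstanceAs (Nontrivial (PiLp 2 fun _ : Fin d => ℝ))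
  set E := EuclideanSpace ℝ (Fin d)
  set A1 : ℝ≥0∞ := ∫⁻ y in Metric.ball (0 : E) 1, ENNReal.ofReal (‖y‖ ^ (α - d)) with hA1
  set B1 : ℝ≥0∞ := ∫⁻ y in (Metric.ball (0 : E) 1)ᶜ,
      ENNReal.ofReal (‖y‖ ^ (-(d : ℝ) - α)) with hB1
  set v : ℝ≥0∞ := volume (Metric.ball (0 : E) 1) with hv
  have hA1lt : A1 < ∞ := my_A1_finite d hd α hα0 hαd
  have hB1lt : B1 < ∞ := my_B1_finite d α hα0
  have hvlt : v < ∞ := measure_ball_lt_top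
  have hsumlt : A1 + v + B1 < ∞ := by
    exact ENNReal.add_lt_top.2 ⟨ENNReal.add_lt_top.2 ⟨hA1lt, hvlt⟩, hB1lt⟩
  set M : ℝ := (A1 + v + B1).toReal with hM
  have hM0 : 0 ≤ M := ENNReal.toReal_nonneg
  refine ⟨c * M + 1, by positivity, ?_⟩
  intro t ht x z p hp hp0 hbd1 hbd2
  set r : ℝ := t ^ (α⁻¹) with hrdef
  have hr : 0 < r := Real.rpow_pos_of_pos ht _
  have hrα : r ^ α = t := by
    rw [hrdef, ← Real.rpow_mul ht.le, inv_mul_cancel₀ hα0.ne', Real.rpow_one]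
  have hrd : (r : ℝ) ^ (d : ℕ) = t ^ ((d : ℝ) / α) := by
    rw [← Real.rpow_natCast r d, hrdef, ← Real.rpow_mul ht.le]
    congr 1
    field_simp
  have hrnegd : r ^ (-(d : ℝ)) = t ^ (-(d : ℝ) / α) := by
    rw [hrdef, ← Real.rpow_mul ht.le]
    congr 1
    field_simp
  -- exponent algebra
  have hte : t ^ (-(d : ℝ) / α) * t = t ^ (1 - (d : ℝ) / α) := by
    nth_rewrite 2 [← Real.rpow_one t]
    rw [← Real.rpow_add ht]
    congr 1
    ring
  set g : E → ℝ≥0∞ := fun y => ENNReal.ofReal (p y * ‖y - z‖ ^ (α - d)) with hg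
  set S1 : Set E := Metric.ball z r with hS1
  set S2 : Set E := (Metric.ball z r)ᶜ ∩ Metric.ball x r with hS2
  set S3 : Set E := (Metric.ball z r)ᶜ ∩ (Metric.ball x r)ᶜ with hS3
  have hcover : (univ : Set E) ⊆ S1 ∪ (S2 ∪ S3) := by
    intro y _
    by_cases h1 : y ∈ Metric.ball z r
    · exact Or.inl h1
    · by_cases h2 : y ∈ Metric.ball x r
      · exact Or.inr (Or.inl ⟨h1, h2⟩)
      · exact Or.inr (Or.inr ⟨h1, h2⟩)
  have hsplit : ∫⁻ y, g y ≤ (∫⁻ y in S1, g y) + ((∫⁻ y in S2, g y) + ∫⁻ y in S3, g y) := by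
    calc ∫⁻ y, g y = ∫⁻ y in univ, g y := by rw [Measure.restrict_univ]
      _ ≤ ∫⁻ y in S1 ∪ (S2 ∪ S3), g y := lintegral_mono_set hcover
      _ ≤ (∫⁻ y in S1, g y) + ∫⁻ y in S2 ∪ S3, g y := lintegral_union_le _ _ _
      _ ≤ _ := by gcongr; exact lintegral_union_le _ _ _
  -- preimage identities
  have hpre_ball : (r • · : E → E) ⁻¹' Metric.ball 0 r = Metric.ball 0 1 := by
    ext y
    simp only [Set.mem_preimage, mem_ball_zero_iff, norm_smul, Real.norm_eq_abs,
      abs_of_pos hr]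
    rw [mul_lt_iff_lt_one_right hr]
  -- Term 1
  have hT1 : ∫⁻ y in S1, g y ≤ ENNReal.ofReal (c * t ^ (1 - (d : ℝ) / α)) * A1 := by
    have hmono : ∀ y ∈ S1, g y ≤
        ENNReal.ofReal (c * t ^ (-(d : ℝ) / α)) * ENNReal.ofReal (‖y - z‖ ^ (α - d)) := by
      intro y _
      rw [← ENNReal.ofReal_mul (by positivity)]
      exact ENNReal.ofReal_le_ofReal
        (mul_le_mul_of_nonneg_right (hbd1 y) (Real.rpow_nonneg (norm_nonneg _) _))
    have hmeas : Measurable fun y : E => ENNReal.ofReal (‖y - z‖ ^ (α - d)) :=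
      ENNReal.measurable_ofReal.comp (((measurable_sub_const z).norm).pow_const _)
    calc ∫⁻ y in S1, g y
        ≤ ∫⁻ y in S1, ENNReal.ofReal (c * t ^ (-(d : ℝ) / α)) *
            ENNReal.ofReal (‖y - z‖ ^ (α - d)) :=
          setLIntegral_mono' measurableSet_ball hmono
      _ = ENNReal.ofReal (c * t ^ (-(d : ℝ) / α)) *
            ∫⁻ y in S1, ENNReal.ofReal (‖y - z‖ ^ (α - d)) :=
          lintegral_const_mul _ hmeas
      _ = ENNReal.ofReal (c * t ^ (-(d : ℝ) / α)) *
            (ENNReal.ofReal (r ^ α) * A1) := by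
          congr 1
          have hset : S1 = {y : E | y - z ∈ Metric.ball 0 r} := by
            ext y; simp [hS1, Metric.mem_ball, dist_eq_norm, mem_ball_zero_iff]
            rw [dist_eq_norm]
          rw [hset, my_translate _ measurableSet_ball z,
            my_scale (α - d) r hr measurableSet_ball, hpre_ball]
          congr 2
          ring
      _ = ENNReal.ofReal (c * t ^ (1 - (d : ℝ) / α)) * A1 := by
          rw [← mul_assoc, ← ENNReal.ofReal_mul (by positivity), hrα]
          congr 2
          rw [mul_assoc, hte]
  -- Term 2
  have hT2 : ∫⁻ y in S2, g y ≤ ENNReal.ofReal (c * t ^ (1 - (d : ℝ) / α)) * v := by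
    have hmono : ∀ y ∈ S2, g y ≤
        ENNReal.ofReal (c * t ^ (-(d : ℝ) / α) * r ^ (α - d)) := by
      intro y hy
      have hyz : r ≤ ‖y - z‖ := by
        have := hy.1
        rw [hS1] at *
        rw [← dist_eq_norm]
        simpa [mem_ball_iff_norm, not_lt] using this
      have hw : ‖y - z‖ ^ (α - d) ≤ r ^ (α - d) :=
        Real.rpow_le_rpow_of_nonpos hr hyz (by linarith)
      exact ENNReal.ofReal_le_ofReal <| by
        calc p y * ‖y - z‖ ^ (α - d) ≤ (c * t ^ (-(d : ℝ) / α)) * (r ^ (α - d)) :=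
          mul_le_mul (hbd1 y) hw (Real.rpow_nonneg (norm_nonneg _) _) (by positivity)
        _ = c * t ^ (-(d : ℝ) / α) * r ^ (α - d) := by ring
    have hS2m : MeasurableSet S2 := measurableSet_ball.compl.inter measurableSet_ball
    calc ∫⁻ y in S2, g y
        ≤ ∫⁻ _ in S2, ENNReal.ofReal (c * t ^ (-(d : ℝ) / α) * r ^ (α - d)) :=
          setLIntegral_mono' hS2m hmono
      _ = ENNReal.ofReal (c * t ^ (-(d : ℝ) / α) * r ^ (α - d)) * volume S2 :=
          setLIntegral_const _ _
      _ ≤ ENNReal.ofReal (c * t ^ (-(d : ℝ) / α) * r ^ (α - d)) *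
            volume (Metric.ball x r) := by gcongr; exact inter_subset_right
      _ = ENNReal.ofReal (c * t ^ (1 - (d : ℝ) / α)) * v := by
          have hrad : r ^ (α - (d:ℝ)) * r ^ (d:ℕ) = t := by
            rw [← Real.rpow_natCast r d, ← Real.rpow_add hr,
              show α - (d:ℝ) + d = α from by ring, hrα]
          have hkey2 : c * t ^ (-(d:ℝ)/α) * r ^ (α - (d:ℝ)) * r ^ (d:ℕ)
              = c * t ^ (1 - (d:ℝ)/α) := by
            rw [show c * t ^ (-(d:ℝ)/α) * r ^ (α - (d:ℝ)) * r ^ (d:ℕ)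
              = c * (t ^ (-(d:ℝ)/α) * (r ^ (α - (d:ℝ)) * r ^ (d:ℕ))) from by ring, hrad, hte]
          rw [Measure.addHaar_ball volume x hr.le, finrank_euclideanSpace_fin, ← mul_assoc,
            ← ENNReal.ofReal_mul (by positivity), hkey2]
  -- Term 3
  have hT3 : ∫⁻ y in S3, g y ≤ ENNReal.ofReal (c * t ^ (1 - (d : ℝ) / α)) * B1 := by
    have hmono : ∀ y ∈ S3, g y ≤
        ENNReal.ofReal (c * t * r ^ (α - (d:ℝ))) *
          ENNReal.ofReal (‖y - x‖ ^ (-(d:ℝ) - α)) := by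
      intro y hy
      have hyz : r ≤ ‖y - z‖ := by
        have := hy.1
        rw [← dist_eq_norm]
        simpa [Metric.mem_ball, dist_eq_norm, not_lt] using this
      have hyx : r ≤ ‖y - x‖ := by
        have := hy.2
        rw [← dist_eq_norm]
        simpa [Metric.mem_ball, dist_eq_norm, not_lt] using this
      have hynex : y ≠ x := by
        intro h
        rw [h, sub_self, norm_zero] at hyx
        exact absurd hyx (not_le.mpr hr)
      have hw : ‖y - z‖ ^ (α - (d:ℝ)) ≤ r ^ (α - (d:ℝ)) :=
        Real.rpow_le_rpow_of_nonpos hr hyz (by linarith)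
      have hpb : p y ≤ c * t * ‖y - x‖ ^ (-(d:ℝ) - α) := by
        have := hbd2 y hynex
        rwa [norm_sub_rev x y] at this
      rw [← ENNReal.ofReal_mul (by positivity)]
      apply ENNReal.ofReal_le_ofReal
      calc p y * ‖y - z‖ ^ (α - (d:ℝ))
          ≤ (c * t * ‖y - x‖ ^ (-(d:ℝ) - α)) * (r ^ (α - (d:ℝ))) :=
            mul_le_mul hpb hw (Real.rpow_nonneg (norm_nonneg _) _) (by positivity)
        _ = c * t * r ^ (α - (d:ℝ)) * ‖y - x‖ ^ (-(d:ℝ) - α) := by ring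
    have hS3m : MeasurableSet S3 := measurableSet_ball.compl.inter measurableSet_ball.compl
    have hmeas : Measurable fun y : E => ENNReal.ofReal (‖y - x‖ ^ (-(d:ℝ) - α)) :=
      ENNReal.measurable_ofReal.comp (((measurable_sub_const x).norm).pow_const _)
    calc ∫⁻ y in S3, g y
        ≤ ∫⁻ y in S3, ENNReal.ofReal (c * t * r ^ (α - (d:ℝ))) *
            ENNReal.ofReal (‖y - x‖ ^ (-(d:ℝ) - α)) := setLIntegral_mono' hS3m hmono
      _ = ENNReal.ofReal (c * t * r ^ (α - (d:ℝ))) *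
            ∫⁻ y in S3, ENNReal.ofReal (‖y - x‖ ^ (-(d:ℝ) - α)) :=
          lintegral_const_mul _ hmeas
      _ ≤ ENNReal.ofReal (c * t * r ^ (α - (d:ℝ))) *
            ∫⁻ y in (Metric.ball x r)ᶜ, ENNReal.ofReal (‖y - x‖ ^ (-(d:ℝ) - α)) := by
          gcongr
          exact inter_subset_right
      _ = ENNReal.ofReal (c * t * r ^ (α - (d:ℝ))) *
            (ENNReal.ofReal (r ^ (-α)) * B1) := by
          congr 1
          have hset : (Metric.ball x r)ᶜ = {y : E | y - x ∈ (Metric.ball 0 r)ᶜ} := by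
            ext y
            simp [Metric.mem_ball, dist_eq_norm, mem_ball_zero_iff]
            exact Iff.rfl
          have hpre : (r • · : E → E) ⁻¹' (Metric.ball 0 r)ᶜ = (Metric.ball 0 1)ᶜ := by
            rw [Set.preimage_compl, hpre_ball]
          rw [hset, my_translate _ measurableSet_ball.compl x,
            my_scale (-(d:ℝ) - α) r hr measurableSet_ball.compl, hpre]
          congr 2
          ring
      _ = ENNReal.ofReal (c * t ^ (1 - (d : ℝ) / α)) * B1 := by
          rw [← mul_assoc, ← ENNReal.ofReal_mul (by positivity)]
          congr 2
          have : r ^ (α - (d:ℝ)) * r ^ (-α) = r ^ (-(d:ℝ)) := by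
            rw [← Real.rpow_add hr]
            congr 1
            ring
          rw [mul_assoc, this, hrnegd]
          rw [mul_assoc, mul_comm t (t ^ (-(d:ℝ)/α)), hte]
  -- combine
  have htotal : ∫⁻ y, g y ≤
      ENNReal.ofReal (c * t ^ (1 - (d : ℝ) / α)) * (A1 + v + B1) := by
    calc ∫⁻ y, g y ≤ (∫⁻ y in S1, g y) + ((∫⁻ y in S2, g y) + ∫⁻ y in S3, g y) := hsplit
      _ ≤ ENNReal.ofReal (c * t ^ (1 - (d : ℝ) / α)) * A1 +
          (ENNReal.ofReal (c * t ^ (1 - (d : ℝ) / α)) * v +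
           ENNReal.ofReal (c * t ^ (1 - (d : ℝ) / α)) * B1) := by
          gcongr
      _ = ENNReal.ofReal (c * t ^ (1 - (d : ℝ) / α)) * (A1 + v + B1) := by ring
  have hsum_eq : (A1 + v + B1) = ENNReal.ofReal M := by
    rw [hM, ENNReal.ofReal_toReal hsumlt.ne]
  calc ∫⁻ y, g y ≤ ENNReal.ofReal (c * t ^ (1 - (d : ℝ) / α)) * ENNReal.ofReal M := by
        rw [← hsum_eq]; exact htotal
    _ = ENNReal.ofReal (c * t ^ (1 - (d : ℝ) / α) * M) := by
        rw [← ENNReal.ofReal_mul (by positivity)]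
    _ ≤ ENNReal.ofReal ((c * M + 1) * t ^ (1 - (d : ℝ) / α)) := by
        apply ENNReal.ofReal_le_ofReal
        have h1 : (0:ℝ) ≤ t ^ (1 - (d : ℝ) / α) := Real.rpow_nonneg ht.le _
        nlinarith

end Aux

open Metric Set in
/-- There is `C = C(c,d,α) > 0` such that any nonnegative measurable `p`
satisfying the two standard stable heat-kernel upper bounds `p(y) ≤ c t^(-d/α)` and
`p(y) ≤ c t ‖x-y‖^(-d-α)` (for `y ≠ x`) satisfies
`∫ p(y) ‖y-z‖^(α-d) dy ≤ C (t^(1-d/α) + t^(-(d-α)/α))`.  In particular, for any family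
`p t x y` satisfying these bounds for all `t > 0`, the supremum over `x, z` of
`∫ p(t,x,y) ‖y-z‖^(α-d) dy` tends to `0` as `t → ∞`. -/
theorem heat_kernel_riesz_integral_bound (d : ℕ) (hd : 1 ≤ d) (α : ℝ)
    (hα0 : 0 < α) (hα2 : α < 2) (hαd : α < d) (c : ℝ) (hc : 0 < c) :
    (∃ C > (0 : ℝ), ∀ t > (0 : ℝ), ∀ x z : EuclideanSpace ℝ (Fin d),
      ∀ p : EuclideanSpace ℝ (Fin d) → ℝ, Measurable p → (∀ y, 0 ≤ p y) →
        (∀ y, p y ≤ c * t ^ (-(d : ℝ) / α)) →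
        (∀ y, y ≠ x → p y ≤ c * t * ‖x - y‖ ^ (-(d : ℝ) - α)) →
        (∫⁻ y : EuclideanSpace ℝ (Fin d),
            ENNReal.ofReal (p y * ‖y - z‖ ^ (α - d))) ≤
          ENNReal.ofReal (C * (t ^ (1 - (d : ℝ) / α) + t ^ (-((d : ℝ) - α) / α)))) ∧
    (∀ p : ℝ → EuclideanSpace ℝ (Fin d) → EuclideanSpace ℝ (Fin d) → ℝ,
      (∀ t > (0 : ℝ), ∀ x, Measurable (p t x)) →
      (∀ t > (0 : ℝ), ∀ x y, 0 ≤ p t x y) →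
      (∀ t > (0 : ℝ), ∀ x y, p t x y ≤ c * t ^ (-(d : ℝ) / α)) →
      (∀ t > (0 : ℝ), ∀ x y, x ≠ y → p t x y ≤ c * t * ‖x - y‖ ^ (-(d : ℝ) - α)) →
      Tendsto (fun t : ℝ => ⨆ x : EuclideanSpace ℝ (Fin d),
          ⨆ z : EuclideanSpace ℝ (Fin d),
            ∫⁻ y : EuclideanSpace ℝ (Fin d),
              ENNReal.ofReal (p t x y * ‖y - z‖ ^ (α - d)))
        atTop (nhds 0)) := by
  obtain ⟨C, hC, hmain⟩ := my_main d hd α hα0 hαd c hc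
  have hCbound : ∀ t > (0:ℝ),
      ENNReal.ofReal (C * t ^ (1 - (d : ℝ) / α)) ≤
        ENNReal.ofReal (C * (t ^ (1 - (d : ℝ) / α) + t ^ (-((d : ℝ) - α) / α))) := by
    intro t ht
    apply ENNReal.ofReal_le_ofReal
    have h1 : (0:ℝ) ≤ t ^ (-((d : ℝ) - α) / α) := Real.rpow_nonneg ht.le _
    nlinarith
  constructor
  · refine ⟨C, hC, fun t ht x z p hp hp0 h1 h2 => ?_⟩
    exact (hmain t ht x z p hp hp0 h1 h2).trans (hCbound t ht)
  · intro p hmeas hpos h1 h2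
    have hub : ∀ᶠ t : ℝ in atTop,
        (⨆ x : EuclideanSpace ℝ (Fin d), ⨆ z : EuclideanSpace ℝ (Fin d),
          ∫⁻ y : EuclideanSpace ℝ (Fin d),
            ENNReal.ofReal (p t x y * ‖y - z‖ ^ (α - d))) ≤
          ENNReal.ofReal (C * t ^ (1 - (d : ℝ) / α)) := by
      filter_upwards [eventually_gt_atTop (0:ℝ)] with t ht
      refine iSup_le fun x => iSup_le fun z => ?_
      exact hmain t ht x z (p t x) (hmeas t ht x) (hpos t ht x) (h1 t ht x)
        (fun y hy => h2 t ht x y (Ne.symm hy))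
    have hexp : (0:ℝ) < (d : ℝ) / α - 1 := by
      have : (1:ℝ) < (d : ℝ) / α := (one_lt_div hα0).mpr hαd
      linarith
    have htend0 : Tendsto (fun t : ℝ => t ^ (1 - (d : ℝ) / α)) atTop (nhds 0) := by
      have := tendsto_rpow_neg_atTop hexp
      simpa [neg_sub] using this
    have htend1 : Tendsto (fun t : ℝ => C * t ^ (1 - (d : ℝ) / α)) atTop (nhds 0) := by
      simpa using tendsto_const_nhds.mul htend0
    have htend2 : Tendsto (fun t : ℝ => ENNReal.ofReal (C * t ^ (1 - (d : ℝ) / α)))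
        atTop (nhds 0) := by
      have := (ENNReal.continuous_ofReal.tendsto 0).comp htend1
      simpa [Function.comp_def] using this
    exact tendsto_of_tendsto_of_tendsto_of_le_of_le' tendsto_const_nhds htend2
      (Eventually.of_forall fun t => zero_le) hub
end
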